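/- Let N ≥ 1, let R be a Borel probability measure on ℝ^N, and let P be a Borel probability measure with P ≪ R and H(P|R) < ∞; write ρ := dP/dR. Let (K_n)_{n∈ℕ} be an increasing sequence of compact subsets of ℝ^N with ⋃_n K_n = ℝ^N, and set C_n := ∫_{K_n} (ρ ∧ n) dR. Then C_n → 1 as n → ∞; for every n with C_n > 0, the measure q_n := C_n^{−1} (ρ ∧ n) 1_{K_n} · R is a Borel probability measure; and, along the indices n with C_n > 0, q_n converges weakly to P and H(q_n|R) → H(P|R). -/

import Mathlib

open MeasureTheory Filter Topology
open scoped ENNReal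

/- Relative entropy `H(P|Q)`: `∫ log (dP/dQ) dP` if `P ≪ Q` (and the integral makes
sense), and `+∞` otherwise. -/
open Classical in
noncomputable def relEntropy {α : Type*} [MeasurableSpace α] (P Q : Measure α) : EReal :=
  if P ≪ Q ∧ Integrable (llr P Q) P then ((∫ x, llr P Q x ∂P : ℝ) : EReal) else ⊤

/-- The set of couplings `Π(μ,ν)`: probability measures on `α × α` with first marginal `μ`
and second marginal `ν`. -/
def couplings {α : Type*} [MeasurableSpace α] (μ ν : Measure α) : Set (Measure (α × α)) :=
  {p | IsProbabilityMeasure p ∧ p.map Prod.fst = μ ∧ p.map Prod.snd = ν}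

/-- The set `Π_X(μ,ν)`: probability measures on `(α × α) × (α × α)`
(points `((x₁,v₁),(x₂,v₂))`) whose pushforwards under `((x₁,v₁),(x₂,v₂)) ↦ x₁` and
`((x₁,v₁),(x₂,v₂)) ↦ x₂` are `μ` and `ν` respectively. -/
def PiX {α : Type*} [MeasurableSpace α] (μ ν : Measure α) :
    Set (Measure ((α × α) × (α × α))) :=
  {p | IsProbabilityMeasure p ∧ p.map (fun z => z.1.1) = μ ∧ p.map (fun z => z.2.1) = ν}

/-- Auxiliary: bound on `|x log x|` for `0 ≤ x ≤ y`. -/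
lemma xlogx_abs_le {x y : ℝ} (hx : 0 ≤ x) (hxy : x ≤ y) :
    |x * Real.log x| ≤ 1 + y * |Real.log y| := by
  have hy : 0 ≤ y := hx.trans hxy
  rcases le_or_gt x 1 with h1 | h1
  · have hb : |x * Real.log x| ≤ 1 := by
      rcases eq_or_lt_of_le hx with h0 | h0
      · simp [← h0]
      · have hlog : Real.log x ≤ 0 := Real.log_nonpos hx h1
        rw [abs_of_nonpos (mul_nonpos_of_nonneg_of_nonpos hx hlog)]
        have h2 : Real.log x⁻¹ ≤ x⁻¹ - 1 := Real.log_le_sub_one_of_pos (inv_pos.2 h0)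
        rw [Real.log_inv] at h2
        have := mul_le_mul_of_nonneg_left h2 hx
        rw [mul_sub, mul_comm] at this
        have hxx : x * x⁻¹ = 1 := mul_inv_cancel₀ h0.ne'
        nlinarith
    nlinarith [abs_nonneg (Real.log y), mul_nonneg hy (abs_nonneg (Real.log y))]
  · have hly : 0 ≤ Real.log y := Real.log_nonneg (h1.le.trans hxy)
    have hlx : 0 ≤ Real.log x := Real.log_nonneg h1.le
    have : x * Real.log x ≤ y * Real.log y :=
      mul_le_mul hxy (Real.log_le_log (by linarith) hxy) hlx hy
    rw [abs_of_nonneg (mul_nonneg (by linarith) hlx), abs_of_nonneg hly]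
    linarith

/-- Auxiliary: integral against a rescaled with-density measure. -/
lemma integral_inv_smul_withDensity {α : Type*} [MeasurableSpace α] (R : Measure α)
    (g : α → ℝ≥0∞) (hg : Measurable g) (hlt : ∀ z, g z < ⊤) (c : ℝ≥0∞) (φ : α → ℝ) :
    ∫ z, φ z ∂(c⁻¹ • R.withDensity g) = c.toReal⁻¹ * ∫ z, (g z).toReal * φ z ∂ R := by
  rw [integral_smul_measure, ENNReal.toReal_inv]
  have h1 : R.withDensity g = R.withDensity (fun z => ((g z).toNNReal : ℝ≥0∞)) :=
    withDensity_congr_ae (ae_of_all _ fun z => (ENNReal.coe_toNNReal (hlt z).ne).symm)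
  have h2 : ∫ x, (g x).toNNReal • φ x ∂ R = ∫ z, (g z).toReal * φ z ∂ R := by
    refine integral_congr_ae (ae_of_all _ fun z => ?_)
    show (g z).toNNReal • φ z = (g z).toReal * φ z
    rw [NNReal.smul_def]
    rfl
  rw [h1, integral_withDensity_eq_integral_smul hg.ennreal_toNNReal φ, h2]
  exact smul_eq_mul ..

/-- truncation approximation of a finite-entropy measure by measures with
bounded, compactly supported densities, with convergence of relative entropies. -/
theorem truncation_approximation
    (N : ℕ) (hN : 1 ≤ N)
    (R P : Measure (EuclideanSpace ℝ (Fin N)))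
    [IsProbabilityMeasure R] [IsProbabilityMeasure P]
    (hac : P ≪ R) (hfin : relEntropy P R ≠ ⊤)
    (K : ℕ → Set (EuclideanSpace ℝ (Fin N)))
    (hKcp : ∀ n, IsCompact (K n)) (hKmono : Monotone K) (hKuniv : ⋃ n, K n = Set.univ)
    (Cn : ℕ → ℝ≥0∞)
    (hCn : ∀ n, Cn n = ∫⁻ z in K n, min (P.rnDeriv R z) (n : ℝ≥0∞) ∂ R)
    (q : ℕ → Measure (EuclideanSpace ℝ (Fin N)))
    (hq : ∀ n, q n = (Cn n)⁻¹ •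
      R.withDensity ((K n).indicator (fun z => min (P.rnDeriv R z) (n : ℝ≥0∞)))) :
    Tendsto Cn atTop (𝓝 1) ∧
    (∀ n, 0 < Cn n → IsProbabilityMeasure (q n)) ∧
    (∀ f : BoundedContinuousFunction (EuclideanSpace ℝ (Fin N)) ℝ,
      Tendsto (fun n => ∫ x, f x ∂(q n)) (atTop ⊓ 𝓟 {n | 0 < Cn n})
        (𝓝 (∫ x, f x ∂P))) ∧
    Tendsto (fun n => relEntropy (q n) R) (atTop ⊓ 𝓟 {n | 0 < Cn n})
      (𝓝 (relEntropy P R)) := by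
  classical
  have : P.HaveLebesgueDecomposition R :=
    @Measure.haveLebesgueDecomposition_of_sigmaFinite _ _ P R instSFiniteOfSigmaFinite inferInstance
  have hintP : Integrable (llr P R) P := by
    by_contra h
    exact hfin (by rw [relEntropy, if_neg (fun hh => h hh.2)])
  set ρ : EuclideanSpace ℝ (Fin N) → ℝ≥0∞ := P.rnDeriv R with hρdef
  have hρmeas : Measurable ρ := Measure.measurable_rnDeriv P R
  set g : ℕ → EuclideanSpace ℝ (Fin N) → ℝ≥0∞ :=
    fun n => (K n).indicator (fun z => min (ρ z) n) with hgdef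
  have hKm : ∀ n, MeasurableSet (K n) := fun n => (hKcp n).measurableSet
  have hgmeas : ∀ n, Measurable (g n) :=
    fun n => (hρmeas.min measurable_const).indicator (hKm n)
  have hgle : ∀ n z, g n z ≤ ρ z := by
    intro n z
    by_cases h : z ∈ K n
    · rw [hgdef]; simp only [Set.indicator_of_mem h]; exact min_le_left _ _
    · rw [hgdef]; simp only [Set.indicator_of_notMem h]; exact zero_le
  have hgleN : ∀ n z, g n z ≤ n := by
    intro n z
    by_cases h : z ∈ K n
    · rw [hgdef]; simp only [Set.indicator_of_mem h]; exact min_le_right _ _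
    · rw [hgdef]; simp only [Set.indicator_of_notMem h]; exact zero_le
  have hglt : ∀ n z, g n z < ⊤ := fun n z => (hgleN n z).trans_lt (ENNReal.natCast_lt_top n)
  have hgmono : ∀ z, Monotone fun n => g n z := by
    intro z n m hnm
    by_cases h : z ∈ K n
    · have hm : z ∈ K m := hKmono hnm h
      simp only [hgdef, Set.indicator_of_mem h, Set.indicator_of_mem hm]
      exact min_le_min le_rfl (Nat.cast_le.2 hnm)
    · simp only [hgdef, Set.indicator_of_notMem h]; exact zero_le
  have hgev : ∀ z, ρ z ≠ ⊤ → ∀ᶠ n in atTop, g n z = ρ z := by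
    intro z hz
    obtain ⟨m, hm⟩ := Set.mem_iUnion.1 (hKuniv ▸ Set.mem_univ z)
    obtain ⟨k, hk⟩ := ENNReal.exists_nat_gt hz
    filter_upwards [eventually_ge_atTop (max m k)] with n hn
    have hmem : z ∈ K n := hKmono ((le_max_left m k).trans hn) hm
    have hle : ρ z ≤ n := hk.le.trans (Nat.cast_le.2 ((le_max_right m k).trans hn))
    rw [hgdef]; simp only [Set.indicator_of_mem hmem]; exact min_eq_left hle
  have hCn' : ∀ n, Cn n = ∫⁻ z, g n z ∂ R := by
    intro n; rw [hCn n, hgdef, lintegral_indicator (hKm n)]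
  have hgtends : ∀ᵐ z ∂ R, Tendsto (fun n => g n z) atTop (𝓝 (ρ z)) := by
    filter_upwards [Measure.rnDeriv_lt_top P R] with z hz
    exact tendsto_const_nhds.congr' ((hgev z hz.ne).mono fun n h => h.symm)
  have hρint : ∫⁻ z, ρ z ∂ R = 1 := by
    rw [hρdef, Measure.lintegral_rnDeriv hac]; exact measure_univ
  have hCtend : Tendsto Cn atTop (𝓝 1) := by
    have := lintegral_tendsto_of_tendsto_of_monotone
      (fun n => (hgmeas n).aemeasurable) (ae_of_all _ hgmono) hgtends
    rw [hρint] at this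
    exact this.congr fun n => (hCn' n).symm
  have hCle : ∀ n, Cn n ≤ 1 := by
    intro n; rw [hCn' n, ← hρint]; exact lintegral_mono (hgle n)
  have hCtop : ∀ n, Cn n ≠ ⊤ := fun n => ((hCle n).trans_lt (by norm_num)).ne
  have hevpos : ∀ᶠ n in atTop, 0 < Cn n :=
    hCtend.eventually (lt_mem_nhds (by norm_num : (0:ℝ≥0∞) < 1))
  have hprob : ∀ n, 0 < Cn n → IsProbabilityMeasure (q n) := by
    intro n hn
    constructor
    rw [hq n, Measure.smul_apply, withDensity_apply _ MeasurableSet.univ,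
      Measure.restrict_univ, ← hCn' n, smul_eq_mul]
    exact ENNReal.inv_mul_cancel hn.ne' (hCtop n)
  -- integral formula
  have hint_q : ∀ n (φ : EuclideanSpace ℝ (Fin N) → ℝ),
      ∫ z, φ z ∂(q n) = (Cn n).toReal⁻¹ * ∫ z, (g n z).toReal * φ z ∂ R := by
    intro n φ
    rw [hq n]
    exact integral_inv_smul_withDensity R (g n) (hgmeas n) (hglt n) (Cn n) φ
  have hhint : ∀ n, ∫ z, (g n z).toReal ∂ R = (Cn n).toReal := by
    intro n
    rw [integral_toReal (hgmeas n).aemeasurable (ae_of_all _ fun z => hglt n z), hCn' n]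
  have hcr : Tendsto (fun n => (Cn n).toReal) atTop (𝓝 1) := by
    have h := (ENNReal.tendsto_toReal (by norm_num : (1:ℝ≥0∞) ≠ ⊤)).comp hCtend
    simpa [Function.comp_def] using h
  -- weak convergence
  have hweak : ∀ f : BoundedContinuousFunction (EuclideanSpace ℝ (Fin N)) ℝ,
      Tendsto (fun n => ∫ x, f x ∂(q n)) atTop (𝓝 (∫ x, f x ∂P)) := by
    intro f
    have key : ∫ z, (ρ z).toReal * f z ∂ R = ∫ x, f x ∂P := by
      simpa [smul_eq_mul] using integral_rnDeriv_smul hac (f := fun z => f z)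
    have hlim2 : Tendsto (fun n => ∫ z, (g n z).toReal * f z ∂ R) atTop
        (𝓝 (∫ z, (ρ z).toReal * f z ∂ R)) := by
      apply tendsto_integral_of_dominated_convergence (fun z => (ρ z).toReal * ‖f‖)
      · exact fun n =>
          ((hgmeas n).ennreal_toReal.mul f.continuous.measurable).aestronglyMeasurable
      · exact (Measure.integrable_toReal_rnDeriv).mul_const ‖f‖
      · intro n
        filter_upwards [Measure.rnDeriv_lt_top P R] with z hz
        rw [norm_mul, Real.norm_eq_abs, abs_of_nonneg ENNReal.toReal_nonneg]
        exact mul_le_mul (ENNReal.toReal_mono hz.ne (hgle n z)) (f.norm_coe_le_norm z)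
          (norm_nonneg _) ENNReal.toReal_nonneg
      · filter_upwards [Measure.rnDeriv_lt_top P R] with z hz
        refine tendsto_const_nhds.congr' ?_
        filter_upwards [hgev z hz.ne] with n hn
        rw [hn]
    rw [← key]
    have := ((hcr.inv₀ one_ne_zero).mul hlim2)
    rw [inv_one, one_mul] at this
    exact this.congr fun n => (hint_q n f).symm
  refine ⟨hCtend, hprob, fun f => (hweak f).mono_left inf_le_left, ?_⟩
  -- relative entropy convergence
  have hPeq : relEntropy P R = ((∫ z, llr P R z ∂P : ℝ) : EReal) := by
    rw [relEntropy, if_pos ⟨hac, hintP⟩]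
  -- integrability of ρ̃ log ρ̃
  have hρllr : Integrable (fun z => (ρ z).toReal * Real.log (ρ z).toReal) R := by
    have h := (integrable_rnDeriv_smul_iff (f := llr P R) hac).2 hintP
    refine h.congr (ae_of_all _ fun z => ?_)
    simp only [llr_def, smul_eq_mul]
    rfl
  -- convergence of ∫ h log h
  have hloglim : Tendsto (fun n => ∫ z, (g n z).toReal * Real.log (g n z).toReal ∂ R) atTop
      (𝓝 (∫ z, (ρ z).toReal * Real.log (ρ z).toReal ∂ R)) := by
    apply tendsto_integral_of_dominated_convergence
      (fun z => 1 + (ρ z).toReal * |Real.log (ρ z).toReal|)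
    · exact fun n => ((hgmeas n).ennreal_toReal.mul
        (Real.measurable_log.comp (hgmeas n).ennreal_toReal)).aestronglyMeasurable
    · have habs : Integrable (fun z => |(ρ z).toReal * Real.log (ρ z).toReal|) R := hρllr.abs
      refine ((integrable_const (1:ℝ)).add habs).congr (ae_of_all _ fun z => ?_)
      simp [abs_mul, abs_of_nonneg (ENNReal.toReal_nonneg (a := ρ z))]
    · intro n
      filter_upwards [Measure.rnDeriv_lt_top P R] with z hz
      rw [Real.norm_eq_abs]
      have h1 : (g n z).toReal ≤ (ρ z).toReal := ENNReal.toReal_mono hz.ne (hgle n z)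
      exact xlogx_abs_le (ENNReal.toReal_nonneg (a := g n z)) h1
    · filter_upwards [Measure.rnDeriv_lt_top P R] with z hz
      refine tendsto_const_nhds.congr' ?_
      filter_upwards [hgev z hz.ne] with n hn
      rw [hn]
  have hL : ∫ z, (ρ z).toReal * Real.log (ρ z).toReal ∂ R = ∫ z, llr P R z ∂P := by
    have h := integral_rnDeriv_smul (f := llr P R) hac
    rw [← h]
    refine integral_congr_ae (ae_of_all _ fun z => ?_)
    simp only [llr_def, smul_eq_mul]
    rfl
  -- the entropy formula for q n, eventually
  have hrel : ∀ n, 0 < Cn n → relEntropy (q n) R =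
      (((Cn n).toReal⁻¹ * (∫ z, (g n z).toReal * Real.log (g n z).toReal ∂ R
        + Real.log ((Cn n).toReal⁻¹) * (Cn n).toReal) : ℝ) : EReal) := by
    intro n hn
    have hcrpos : 0 < (Cn n).toReal := ENNReal.toReal_pos hn.ne' (hCtop n)
    have hcrne : ((Cn n).toReal)⁻¹ ≠ 0 := inv_ne_zero hcrpos.ne'
    have qeq : q n = R.withDensity (fun z => (Cn n)⁻¹ * g n z) := by
      rw [hq n, ← withDensity_smul _ (hgmeas n)]
      rfl
    have hqac : q n ≪ R := by rw [qeq]; exact withDensity_absolutelyContinuous R _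
    have hrn : (q n).rnDeriv R =ᵐ[R] fun z => (Cn n)⁻¹ * g n z := by
      rw [qeq]; exact Measure.rnDeriv_withDensity R ((hgmeas n).const_mul _)
    have hllr : llr (q n) R =ᵐ[R]
        fun z => Real.log ((Cn n).toReal⁻¹ * (g n z).toReal) := by
      filter_upwards [hrn] with z hz
      simp only [llr_def]
      rw [hz, ENNReal.toReal_mul, ENNReal.toReal_inv]
    have hmeasφ : Measurable fun z => Real.log ((Cn n).toReal⁻¹ * (g n z).toReal) :=
      Real.measurable_log.comp ((hgmeas n).ennreal_toReal.const_mul _)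
    -- integrability of llr (q n) R wrt q n
    have hdens_lt : ∀ᵐ z ∂ R, (Cn n)⁻¹ * g n z < ⊤ :=
      ae_of_all _ fun z => ENNReal.mul_lt_top
        (ENNReal.inv_lt_top.2 hn) (hglt n z)
    have hintc : Integrable (llr (q n) R) (q n) := by
      refine Integrable.congr ?_ ((hllr.symm).filter_mono hqac.ae_le)
      rw [qeq, integrable_withDensity_iff ((hgmeas n).const_mul _) hdens_lt]
      have hb : ∀ z, ‖Real.log ((Cn n).toReal⁻¹ * (g n z).toReal)
            * (((Cn n)⁻¹ * g n z).toReal)‖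
          ≤ 1 + ((Cn n).toReal⁻¹ * n) * |Real.log ((Cn n).toReal⁻¹ * n)| := by
        intro z
        rw [ENNReal.toReal_mul, ENNReal.toReal_inv, Real.norm_eq_abs, mul_comm, abs_mul]
        rw [← abs_mul]
        apply xlogx_abs_le (mul_nonneg (inv_nonneg.2 hcrpos.le) ENNReal.toReal_nonneg)
        apply mul_le_mul_of_nonneg_left _ (inv_nonneg.2 hcrpos.le)
        have := ENNReal.toReal_mono (ENNReal.natCast_ne_top n) (hgleN n z)
        simpa using this
      refine Integrable.mono' (integrable_const _)
        ((hmeasφ.mul ((hgmeas n).const_mul _).ennreal_toReal).aestronglyMeasurable)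
        (ae_of_all _ hb)
    rw [relEntropy, if_pos ⟨hqac, hintc⟩]
    congr 1
    -- compute the integral
    rw [integral_congr_ae (hllr.filter_mono hqac.ae_le), hint_q n]
    congr 1
    have hInt1 : Integrable (fun z => (g n z).toReal * Real.log (g n z).toReal) R := by
      refine Integrable.mono' (integrable_const (1 + (n : ℝ) * |Real.log n|))
        (((hgmeas n).ennreal_toReal.mul
          (Real.measurable_log.comp (hgmeas n).ennreal_toReal)).aestronglyMeasurable)
        (ae_of_all _ fun z => ?_)
      rw [Real.norm_eq_abs]
      apply xlogx_abs_le ENNReal.toReal_nonneg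
      have := ENNReal.toReal_mono (ENNReal.natCast_ne_top n) (hgleN n z)
      simpa using this
    have hInt2 : Integrable (fun z => (g n z).toReal * Real.log ((Cn n).toReal⁻¹)) R := by
      refine Integrable.mono' (integrable_const ((n : ℝ) * |Real.log ((Cn n).toReal⁻¹)|))
        (((hgmeas n).ennreal_toReal.mul measurable_const).aestronglyMeasurable)
        (ae_of_all _ fun z => ?_)
      rw [Real.norm_eq_abs, abs_mul, abs_of_nonneg ENNReal.toReal_nonneg]
      apply mul_le_mul_of_nonneg_right _ (abs_nonneg _)
      have := ENNReal.toReal_mono (ENNReal.natCast_ne_top n) (hgleN n z)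
      simpa using this
    have hsplit : ∀ z, (g n z).toReal * Real.log ((Cn n).toReal⁻¹ * (g n z).toReal)
        = (g n z).toReal * Real.log (g n z).toReal
          + (g n z).toReal * Real.log ((Cn n).toReal⁻¹) := by
      intro z
      rcases eq_or_lt_of_le (ENNReal.toReal_nonneg (a := g n z)) with h0 | h0
      · rw [← h0]; simp
      · rw [Real.log_mul hcrne h0.ne', mul_add]; ring
    calc ∫ z, (g n z).toReal * Real.log ((Cn n).toReal⁻¹ * (g n z).toReal) ∂ R
        = ∫ z, ((g n z).toReal * Real.log (g n z).toReal
            + (g n z).toReal * Real.log ((Cn n).toReal⁻¹)) ∂ R :=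
          integral_congr_ae (ae_of_all _ hsplit)
      _ = (∫ z, (g n z).toReal * Real.log (g n z).toReal ∂ R)
            + ∫ z, (g n z).toReal * Real.log ((Cn n).toReal⁻¹) ∂ R :=
          integral_add hInt1 hInt2
      _ = (∫ z, (g n z).toReal * Real.log (g n z).toReal ∂ R)
            + Real.log ((Cn n).toReal⁻¹) * (Cn n).toReal := by
          rw [integral_mul_const, hhint n, mul_comm]
  -- final limit
  have hE : Tendsto (fun n => (Cn n).toReal⁻¹
      * (∫ z, (g n z).toReal * Real.log (g n z).toReal ∂ R
        + Real.log ((Cn n).toReal⁻¹) * (Cn n).toReal)) atTop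
      (𝓝 (∫ z, llr P R z ∂P)) := by
    have hcinv : Tendsto (fun n => (Cn n).toReal⁻¹) atTop (𝓝 1) := by
      have := hcr.inv₀ one_ne_zero
      rwa [inv_one] at this
    have hlogc : Tendsto (fun n => Real.log ((Cn n).toReal⁻¹)) atTop (𝓝 0) := by
      have h2 := (Real.continuousAt_log one_ne_zero).tendsto.comp hcinv
      rw [Real.log_one] at h2
      exact h2
    have := hcinv.mul (hloglim.add (hlogc.mul hcr))
    rw [hL] at this
    simpa using this
  rw [hPeq]
  apply Tendsto.mono_left _ inf_le_left
  refine (EReal.tendsto_coe.2 hE).congr' ?_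
  filter_upwards [hevpos] with n hn
  exact (hrel n hn).symm
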